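/- Let Λ = diag(λ₁,…,λ_n) be a diagonal real matrix and let k : ℝ → Matrix (Fin n) (Fin n) ℝ satisfy, for every t, k'(t) = M(k(t)·Λ·k(t)ᵀ)·k(t) and k(t)ᵀ·k(t) = 1. Write L(t) = k(t)·Λ·k(t)ᵀ and, for column indices a < b, let m_{ab}(t) = k(t)_{1a}·k(t)_{2b} − k(t)_{1b}·k(t)_{2a} be the 2×2 minor of k(t) on the first two rows and columns a, b. Then for all a, b and all t, (m_{ab})′(t) = (λ_a + λ_b − L(t)_{11} − L(t)_{22})·m_{ab}(t). (These minors are the functions F^{ρ}_j of the representation of sl_n on Λ²V and are semiinvariants of the Toda flow.) -/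

import Mathlib

open Matrix

attribute [local instance] Matrix.normedAddCommGroup Matrix.normedSpace

/-- The Toda projection: `M(A)_{ij} = A_{ij}` for `i < j`, `M(A)_{ij} = -A_{ji}` for
`i > j`, and `M(A)_{ii} = 0`. -/
def todaProj {n : ℕ} (A : Matrix (Fin n) (Fin n) ℝ) : Matrix (Fin n) (Fin n) ℝ :=
  Matrix.of fun i j => if i < j then A i j else if j < i then -A j i else 0

/-- The `2×2` minors `m_{ab}(t) = k(t)_{1a}·k(t)_{2b} − k(t)_{1b}·k(t)_{2a}` on the
first two rows of an orthogonal solution `k(t)` of `k' = M(k·Λ·kᵀ)·k`, `Λ = diag(λ)`,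
are semiinvariants of the Toda flow:
`(m_{ab})′ = (λ_a + λ_b − L_{11} − L_{22})·m_{ab}` where `L = k·Λ·kᵀ`. -/
theorem top_minor_semiinvariant {n : ℕ} (lam : Fin (n + 2) → ℝ)
    (k : ℝ → Matrix (Fin (n + 2)) (Fin (n + 2)) ℝ)
    (hk : ∀ t, HasDerivAt k
      (todaProj (k t * Matrix.diagonal lam * (k t)ᵀ) * k t) t)
    (horth : ∀ t, (k t)ᵀ * k t = 1) :
    ∀ (a b : Fin (n + 2)) (t : ℝ),
      HasDerivAt (fun t => k t 0 a * k t 1 b - k t 0 b * k t 1 a)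
        ((lam a + lam b
            - (k t * Matrix.diagonal lam * (k t)ᵀ) 0 0
            - (k t * Matrix.diagonal lam * (k t)ᵀ) 1 1)
          * (k t 0 a * k t 1 b - k t 0 b * k t 1 a)) t := by
  intro a b t
  set L := k t * Matrix.diagonal lam * (k t)ᵀ with hLdef
  -- entrywise derivatives
  have hEntry : ∀ (i c : Fin (n + 2)),
      HasDerivAt (fun t => k t i c) ((todaProj L * k t) i c) t := by
    intro i c
    have := ((Matrix.entryLinearMap ℝ ℝ i c).toContinuousLinearMap.hasFDerivAt).comp_hasDerivAt t (hk t)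
    exact this
  -- L * k = k * Λ
  have hLk : L * k t = k t * Matrix.diagonal lam := by
    rw [hLdef, Matrix.mul_assoc, horth t, Matrix.mul_one]
  -- symmetry of L
  have hsym : L 1 0 = L 0 1 := by
    have : Lᵀ = L := by
      rw [hLdef, Matrix.transpose_mul, Matrix.transpose_mul, Matrix.transpose_transpose,
        Matrix.diagonal_transpose, Matrix.mul_assoc]
    conv_lhs => rw [← this]
    rfl
  -- row 0 formula
  have h0 : ∀ c : Fin (n + 2), (todaProj L * k t) 0 c
      = lam c * k t 0 c - L 0 0 * k t 0 c := by
    intro c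
    rw [Matrix.mul_apply]
    have key : ∀ j : Fin (n + 2), todaProj L 0 j * k t j c
        = L 0 j * k t j c - (if j = 0 then L 0 0 * k t 0 c else 0) := by
      intro j
      rcases eq_or_ne j 0 with h | h
      · subst h; simp [todaProj]
      · have : (0 : Fin (n+2)) < j := Fin.pos_of_ne_zero h
        simp [todaProj, this, h]
    rw [Finset.sum_congr rfl fun j _ => key j, Finset.sum_sub_distrib,
      Finset.sum_ite_eq' Finset.univ (0 : Fin (n+2)) (fun _ => L 0 0 * k t 0 c)]
    simp only [Finset.mem_univ, if_true]
    have : ∑ j, L 0 j * k t j c = (L * k t) 0 c := (Matrix.mul_apply).symm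
    rw [this, hLk, Matrix.mul_diagonal]
    ring
  -- row 1 formula
  have h1 : ∀ c : Fin (n + 2), (todaProj L * k t) 1 c
      = lam c * k t 1 c - L 1 1 * k t 1 c - 2 * L 0 1 * k t 0 c := by
    intro c
    rw [Matrix.mul_apply]
    have key : ∀ j : Fin (n + 2), todaProj L 1 j * k t j c
        = L 1 j * k t j c - (if j = 1 then L 1 1 * k t 1 c else 0)
          - (if j = 0 then 2 * L 0 1 * k t 0 c else 0) := by
      intro j
      rcases eq_or_ne j 0 with h | h
      · subst h
        have h01 : ¬ ((1 : Fin (n+2)) < 0) := by simp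
        have h10 : (0 : Fin (n+2)) < 1 := by
          simp [Fin.lt_def]
        have h0ne1 : (0 : Fin (n+2)) ≠ 1 := ne_of_lt h10
        simp [todaProj, h01, h10, h0ne1, hsym]
        ring
      rcases eq_or_ne j 1 with h' | h'
      · subst h'
        simp [todaProj, h]
      · have hj0 : (j : ℕ) ≠ 0 := fun h0 => h (Fin.ext (by rw [h0, Fin.val_zero]))
        have hj1 : (j : ℕ) ≠ 1 := by simpa [Fin.ext_iff] using h'
        have hgt : (1 : Fin (n+2)) < j := by
          rw [Fin.lt_def, Fin.val_one]
          omega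
        simp [todaProj, hgt, h, h', not_lt_of_gt hgt]
    rw [Finset.sum_congr rfl fun j _ => key j, Finset.sum_sub_distrib, Finset.sum_sub_distrib,
      Finset.sum_ite_eq' Finset.univ (1 : Fin (n+2)) (fun _ => L 1 1 * k t 1 c),
      Finset.sum_ite_eq' Finset.univ (0 : Fin (n+2)) (fun _ => 2 * L 0 1 * k t 0 c)]
    simp only [Finset.mem_univ, if_true]
    have : ∑ j, L 1 j * k t j c = (L * k t) 1 c := (Matrix.mul_apply).symm
    rw [this, hLk, Matrix.mul_diagonal]
    ring
  have hd := ((hEntry 0 a).mul (hEntry 1 b)).sub ((hEntry 0 b).mul (hEntry 1 a))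
  refine HasDerivAt.congr_deriv hd ?_
  rw [h0 a, h0 b, h1 a, h1 b]
  ring
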